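/- There is an absolute constant C such that for every nonnegative measurable function b ∈ L⁴(ℝ) and all integers i, j ≥ 0, one has ∫_ℝ b(ρ₂) ( ∫_{{ρ₁ : 2^{-i} ≤ |ρ₁ - ρ₂| ≤ 2^{-i+1}}} b(ρ₁) ( ∫_{{ρ₃ : 2^{-j} ≤ |ρ₃ - ρ₂| ≤ 2^{-j+1}}} b(ρ₃) b(ρ₁ - ρ₂ + ρ₃) dρ₃ ) dρ₁ ) dρ₂ ≤ C · 2^{-(i+j)} · ‖b‖_{L⁴(ℝ)}⁴. -/

import Mathlib

open MeasureTheory Real Set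
open scoped ENNReal

namespace DyadicAux

def A (c r : ℝ) : Set ℝ := {x : ℝ | r ≤ |x - c| ∧ |x - c| ≤ 2 * r}

lemma measurableSet_A (c r : ℝ) : MeasurableSet (A c r) := by
  have h : Measurable fun x : ℝ => |x - c| := (measurable_id.sub_const c).abs
  exact (measurableSet_le measurable_const h).inter (measurableSet_le h measurable_const)

lemma volume_A_le (c r : ℝ) : volume (A c r) ≤ ENNReal.ofReal (4 * r) := by
  have hsub : A c r ⊆ Icc (c - 2 * r) (c + 2 * r) := by
    intro x hx
    have h1 := abs_le.mp hx.2
    constructor <;> linarith [h1.1, h1.2]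
  calc volume (A c r) ≤ volume (Icc (c - 2 * r) (c + 2 * r)) := measure_mono hsub
    _ = ENNReal.ofReal (4 * r) := by rw [Real.volume_Icc]; ring_nf

lemma mem_A_iff {c r x t : ℝ} : x ∈ A c r ↔ x + t ∈ A (c + t) r := by
  simp only [A, mem_setOf_eq]
  have : x + t - (c + t) = x - c := by ring
  rw [this]

lemma measurable_F {g : ℝ → ℝ≥0∞} (hg : Measurable g) (r : ℝ) :
    Measurable (fun p : ℝ × ℝ => ((A p.1 r).indicator g) p.2) := by
  have hT : MeasurableSet {p : ℝ × ℝ | r ≤ |p.2 - p.1| ∧ |p.2 - p.1| ≤ 2 * r} := by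
    have h : Measurable fun p : ℝ × ℝ => |p.2 - p.1| := (measurable_snd.sub measurable_fst).abs
    exact (measurableSet_le measurable_const h).inter (measurableSet_le h measurable_const)
  have : (fun p : ℝ × ℝ => ((A p.1 r).indicator g) p.2) =
      ({p : ℝ × ℝ | r ≤ |p.2 - p.1| ∧ |p.2 - p.1| ≤ 2 * r}).indicator (fun p => g p.2) := by
    ext p
    by_cases h : p.2 ∈ A p.1 r
    · rw [indicator_of_mem h, indicator_of_mem]; exact h
    · rw [indicator_of_notMem h, indicator_of_notMem]; exact h
  rw [this]
  exact (hg.comp measurable_snd).indicator hT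

lemma measurable_innerInt {g : ℝ → ℝ≥0∞} (hg : Measurable g) (r : ℝ) :
    Measurable (fun x => ∫⁻ y in A x r, g y) := by
  have : (fun x => ∫⁻ y in A x r, g y) = fun x => ∫⁻ y, ((A x r).indicator g) y := by
    ext x; rw [lintegral_indicator (measurableSet_A x r)]
  rw [this]
  exact Measurable.lintegral_prod_right (measurable_F hg r)

lemma swap_lemma {g : ℝ → ℝ≥0∞} (hg : Measurable g) (r : ℝ) :
    ∫⁻ x, ∫⁻ y in A x r, g y ≤ ENNReal.ofReal (4 * r) * ∫⁻ y, g y := by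
  have h1 : ∀ x : ℝ, (∫⁻ y in A x r, g y) = ∫⁻ y, ((A x r).indicator g) y := fun x =>
    (lintegral_indicator (measurableSet_A x r) g).symm
  calc ∫⁻ x, ∫⁻ y in A x r, g y = ∫⁻ x, ∫⁻ y, ((A x r).indicator g) y := by
        simp_rw [h1]
    _ = ∫⁻ y, ∫⁻ x, ((A x r).indicator g) y := by
        exact lintegral_lintegral_swap ((measurable_F hg r).aemeasurable)
    _ ≤ ENNReal.ofReal (4 * r) * ∫⁻ y, g y := by
        rw [← lintegral_const_mul' _ _ ENNReal.ofReal_ne_top]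
        refine lintegral_mono fun y => ?_
        have hkey : ∀ x : ℝ, ((A x r).indicator g) y = ((A y r).indicator (fun _ => g y)) x := by
          intro x
          have hxy : y ∈ A x r ↔ x ∈ A y r := by
            simp only [A, mem_setOf_eq, abs_sub_comm y x]
          by_cases h : y ∈ A x r
          · rw [indicator_of_mem h, indicator_of_mem (hxy.mp h)]
          · rw [indicator_of_notMem h, indicator_of_notMem (fun hc => h (hxy.mpr hc))]
        simp_rw [hkey]
        rw [lintegral_indicator (measurableSet_A y r), setLIntegral_const]
        calc g y * volume (A y r) ≤ g y * ENNReal.ofReal (4 * r) :=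
              mul_le_mul_right (volume_A_le y r) _
          _ = ENNReal.ofReal (4 * r) * g y := mul_comm _ _

lemma trans_lemma (g : ℝ → ℝ≥0∞) (c t r : ℝ) :
    ∫⁻ y in A c r, g (y + t) = ∫⁻ u in A (c + t) r, g u := by
  rw [← lintegral_indicator (measurableSet_A c r), ← lintegral_indicator (measurableSet_A (c+t) r)]
  have h : ∀ y : ℝ, (A c r).indicator (fun y => g (y + t)) y
      = ((A (c+t) r).indicator g) (y + t) := by
    intro y
    by_cases hy : y ∈ A c r
    · rw [indicator_of_mem hy, indicator_of_mem (mem_A_iff.mp hy)]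
    · rw [indicator_of_notMem hy, indicator_of_notMem (fun hc => hy (mem_A_iff.mpr hc))]
  simp_rw [h]
  exact lintegral_add_right_eq_self (fun u => ((A (c+t) r).indicator g) u) t

lemma ofReal_integral_le {α : Type*} [MeasurableSpace α] {μ : Measure α} {f : α → ℝ}
    (hf : ∀ x, 0 ≤ f x) :
    ENNReal.ofReal (∫ x, f x ∂μ) ≤ ∫⁻ x, ENNReal.ofReal (f x) ∂μ := by
  by_cases hi : Integrable f μ
  · rw [integral_eq_lintegral_of_nonneg_ae (Filter.Eventually.of_forall hf)
      hi.aestronglyMeasurable]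
    exact ENNReal.ofReal_toReal_le
  · rw [integral_undef hi]; simp

lemma four_prod_le (a b c d : ℝ≥0∞) : a * b * c * d ≤ a ^ 4 + b ^ 4 + c ^ 4 + d ^ 4 := by
  have h2 : ∀ x y : ℝ≥0∞, x * y ≤ x ^ 2 + y ^ 2 := by
    intro x y
    rcases le_total x y with h | h
    · calc x * y ≤ y * y := mul_le_mul_left h _
        _ = y ^ 2 := (sq y).symm
        _ ≤ x ^ 2 + y ^ 2 := le_add_self
    · calc x * y ≤ x * x := mul_le_mul_right h _
        _ = x ^ 2 := (sq x).symm
        _ ≤ x ^ 2 + y ^ 2 := le_self_add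
  calc a * b * c * d = (a * b) * (c * d) := by ring
    _ ≤ (a * b) ^ 2 + (c * d) ^ 2 := h2 _ _
    _ = a ^ 2 * b ^ 2 + c ^ 2 * d ^ 2 := by rw [mul_pow, mul_pow]
    _ ≤ ((a ^ 2) ^ 2 + (b ^ 2) ^ 2) + ((c ^ 2) ^ 2 + (d ^ 2) ^ 2) := add_le_add (h2 _ _) (h2 _ _)
    _ = a ^ 4 + b ^ 4 + c ^ 4 + d ^ 4 := by ring

end DyadicAux

open DyadicAux

theorem dyadic_quadrilinear_estimate :
    ∃ C : ℝ, 0 < C ∧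
      ∀ b : ℝ → ℝ, Measurable b → (∀ x, 0 ≤ b x) → MemLp b 4 volume →
      ∀ i j : ℕ,
        (∫ ρ₂ : ℝ, b ρ₂ *
            ∫ ρ₁ in {ρ₁ : ℝ | (2 : ℝ) ^ (-(i : ℝ)) ≤ |ρ₁ - ρ₂| ∧
                |ρ₁ - ρ₂| ≤ (2 : ℝ) ^ (-(i : ℝ) + 1)},
              b ρ₁ *
                ∫ ρ₃ in {ρ₃ : ℝ | (2 : ℝ) ^ (-(j : ℝ)) ≤ |ρ₃ - ρ₂| ∧
                    |ρ₃ - ρ₂| ≤ (2 : ℝ) ^ (-(j : ℝ) + 1)},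
                  b ρ₃ * b (ρ₁ - ρ₂ + ρ₃))
          ≤ C * (2 : ℝ) ^ (-((i : ℝ) + (j : ℝ))) * ∫ ρ : ℝ, b ρ ^ 4 := by
  refine ⟨64, by norm_num, ?_⟩
  intro b hb hbnn hb4 i j
  set ai : ℝ := (2 : ℝ) ^ (-(i : ℝ)) with hai_def
  set aj : ℝ := (2 : ℝ) ^ (-(j : ℝ)) with haj_def
  have hai_pos : 0 < ai := Real.rpow_pos_of_pos (by norm_num) _
  have haj_pos : 0 < aj := Real.rpow_pos_of_pos (by norm_num) _
  -- rewrite the sets as annuli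
  have hset : ∀ (a c : ℝ), {x : ℝ | a ≤ |x - c| ∧ |x - c| ≤ 2 * a} = A c a := fun _ _ => rfl
  have h2i : (2 : ℝ) ^ (-(i : ℝ) + 1) = 2 * ai := by
    rw [Real.rpow_add (by norm_num : (0:ℝ) < 2), Real.rpow_one, mul_comm]
  have h2j : (2 : ℝ) ^ (-(j : ℝ) + 1) = 2 * aj := by
    rw [Real.rpow_add (by norm_num : (0:ℝ) < 2), Real.rpow_one, mul_comm]
  simp only [h2i, h2j, hset]
  -- the ENNReal-valued version of b
  set B : ℝ → ℝ≥0∞ := fun x => ENNReal.ofReal (b x) with hB_def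
  have hB : Measurable B := ENNReal.measurable_ofReal.comp hb
  have hB4 : Measurable fun x => B x ^ 4 := hB.pow_const 4
  have hBne : ∀ x, B x ≠ ∞ := fun x => ENNReal.ofReal_ne_top
  set I : ℝ≥0∞ := ∫⁻ x, B x ^ 4 with hI_def
  -- nonnegativity of nested integrals
  have hG : ∀ ρ₂ ρ₁ : ℝ, 0 ≤ ∫ ρ₃ in A ρ₂ aj, b ρ₃ * b (ρ₁ - ρ₂ + ρ₃) := fun ρ₂ ρ₁ =>
    integral_nonneg fun ρ₃ => mul_nonneg (hbnn ρ₃) (hbnn _)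
  have hF : ∀ ρ₂ : ℝ, 0 ≤ ∫ ρ₁ in A ρ₂ ai,
      b ρ₁ * ∫ ρ₃ in A ρ₂ aj, b ρ₃ * b (ρ₁ - ρ₂ + ρ₃) := fun ρ₂ =>
    integral_nonneg fun ρ₁ => mul_nonneg (hbnn ρ₁) (hG ρ₂ ρ₁)
  have hLHS_nonneg : 0 ≤ ∫ ρ₂ : ℝ, b ρ₂ *
      ∫ ρ₁ in A ρ₂ ai, b ρ₁ * ∫ ρ₃ in A ρ₂ aj, b ρ₃ * b (ρ₁ - ρ₂ + ρ₃) :=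
    integral_nonneg fun ρ₂ => mul_nonneg (hbnn ρ₂) (hF ρ₂)
  -- Step 1: pass to lintegrals
  set L : ℝ≥0∞ := ∫⁻ ρ₂, B ρ₂ * ∫⁻ ρ₁ in A ρ₂ ai,
      B ρ₁ * ∫⁻ ρ₃ in A ρ₂ aj, B ρ₃ * B (ρ₁ - ρ₂ + ρ₃) with hL_def
  have step1 : ENNReal.ofReal (∫ ρ₂ : ℝ, b ρ₂ *
      ∫ ρ₁ in A ρ₂ ai, b ρ₁ * ∫ ρ₃ in A ρ₂ aj, b ρ₃ * b (ρ₁ - ρ₂ + ρ₃)) ≤ L := by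
    refine le_trans (ofReal_integral_le fun ρ₂ => mul_nonneg (hbnn ρ₂) (hF ρ₂)) ?_
    refine lintegral_mono fun ρ₂ => ?_
    rw [ENNReal.ofReal_mul (hbnn ρ₂)]
    refine mul_le_mul_right ?_ _
    refine le_trans (ofReal_integral_le fun ρ₁ => mul_nonneg (hbnn ρ₁) (hG ρ₂ ρ₁)) ?_
    refine lintegral_mono fun ρ₁ => ?_
    rw [ENNReal.ofReal_mul (hbnn ρ₁)]
    refine mul_le_mul_right ?_ _
    refine le_trans (ofReal_integral_le fun ρ₃ => mul_nonneg (hbnn ρ₃) (hbnn _)) ?_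
    refine le_of_eq (lintegral_congr fun ρ₃ => ?_)
    rw [ENNReal.ofReal_mul (hbnn ρ₃)]
  -- the function H
  set H : ℝ → ℝ≥0∞ := fun c => ∫⁻ u in A c aj, B u ^ 4 with hH_def
  have hH : Measurable H := measurable_innerInt hB4 aj
  -- Step 2: pointwise bound of inner double integral
  have step2 : L ≤ ∫⁻ ρ₂, (ENNReal.ofReal (4 * ai) * ENNReal.ofReal (4 * aj) * B ρ₂ ^ 4
      + ENNReal.ofReal (4 * aj) * (∫⁻ ρ₁ in A ρ₂ ai, B ρ₁ ^ 4)
      + ENNReal.ofReal (4 * ai) * H ρ₂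
      + (∫⁻ ρ₁ in A ρ₂ ai, H ρ₁)) := by
    refine lintegral_mono fun ρ₂ => ?_
    rw [← lintegral_const_mul' _ _ (hBne ρ₂)]
    have inner_bound : ∀ ρ₁ : ℝ,
        B ρ₂ * (B ρ₁ * ∫⁻ ρ₃ in A ρ₂ aj, B ρ₃ * B (ρ₁ - ρ₂ + ρ₃))
          ≤ ENNReal.ofReal (4 * aj) * B ρ₂ ^ 4 + ENNReal.ofReal (4 * aj) * B ρ₁ ^ 4
            + H ρ₂ + H ρ₁ := by
      intro ρ₁
      have hmul : B ρ₂ * (B ρ₁ * ∫⁻ ρ₃ in A ρ₂ aj, B ρ₃ * B (ρ₁ - ρ₂ + ρ₃))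
          = ∫⁻ ρ₃ in A ρ₂ aj, B ρ₂ * B ρ₁ * (B ρ₃ * B (ρ₁ - ρ₂ + ρ₃)) := by
        rw [← lintegral_const_mul' _ _ (hBne ρ₁), ← lintegral_const_mul' _ _ (hBne ρ₂)]
        refine lintegral_congr fun ρ₃ => ?_
        ring
      rw [hmul]
      have hpt : ∀ ρ₃ : ℝ, B ρ₂ * B ρ₁ * (B ρ₃ * B (ρ₁ - ρ₂ + ρ₃))
          ≤ B ρ₂ ^ 4 + B ρ₁ ^ 4 + B ρ₃ ^ 4 + B (ρ₁ - ρ₂ + ρ₃) ^ 4 := by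
        intro ρ₃
        have := four_prod_le (B ρ₂) (B ρ₁) (B ρ₃) (B (ρ₁ - ρ₂ + ρ₃))
        calc B ρ₂ * B ρ₁ * (B ρ₃ * B (ρ₁ - ρ₂ + ρ₃))
            = B ρ₂ * B ρ₁ * B ρ₃ * B (ρ₁ - ρ₂ + ρ₃) := by ring
          _ ≤ _ := this
      refine le_trans (lintegral_mono hpt) ?_
      have hsplit : (∫⁻ ρ₃ in A ρ₂ aj,
          (B ρ₂ ^ 4 + B ρ₁ ^ 4 + B ρ₃ ^ 4 + B (ρ₁ - ρ₂ + ρ₃) ^ 4))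
          = B ρ₂ ^ 4 * volume (A ρ₂ aj) + B ρ₁ ^ 4 * volume (A ρ₂ aj)
            + (∫⁻ ρ₃ in A ρ₂ aj, B ρ₃ ^ 4)
            + ∫⁻ ρ₃ in A ρ₂ aj, B (ρ₁ - ρ₂ + ρ₃) ^ 4 := by
        rw [lintegral_add_left ((measurable_const.fun_add measurable_const).fun_add hB4),
          lintegral_add_left (measurable_const.fun_add measurable_const),
          lintegral_add_left measurable_const, setLIntegral_const, setLIntegral_const]
      rw [hsplit]
      have htrans : (∫⁻ ρ₃ in A ρ₂ aj, B (ρ₁ - ρ₂ + ρ₃) ^ 4) = H ρ₁ := by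
        have h1 : ∀ ρ₃ : ℝ, B (ρ₁ - ρ₂ + ρ₃) ^ 4
            = (fun u => B u ^ 4) (ρ₃ + (ρ₁ - ρ₂)) := by
          intro ρ₃; congr 2; ring
        simp_rw [h1]
        rw [trans_lemma (fun u => B u ^ 4) ρ₂ (ρ₁ - ρ₂) aj]
        have : ρ₂ + (ρ₁ - ρ₂) = ρ₁ := by ring
        rw [this]
      rw [htrans]
      refine add_le_add (add_le_add (add_le_add ?_ ?_) (le_refl (H ρ₂))) (le_refl (H ρ₁))
      · calc B ρ₂ ^ 4 * volume (A ρ₂ aj) ≤ B ρ₂ ^ 4 * ENNReal.ofReal (4 * aj) :=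
            mul_le_mul_right (volume_A_le _ _) _
          _ = ENNReal.ofReal (4 * aj) * B ρ₂ ^ 4 := mul_comm _ _
      · calc B ρ₁ ^ 4 * volume (A ρ₂ aj) ≤ B ρ₁ ^ 4 * ENNReal.ofReal (4 * aj) :=
            mul_le_mul_right (volume_A_le _ _) _
          _ = ENNReal.ofReal (4 * aj) * B ρ₁ ^ 4 := mul_comm _ _
    refine le_trans (lintegral_mono inner_bound) ?_
    have hsplit2 : (∫⁻ ρ₁ in A ρ₂ ai,
        (ENNReal.ofReal (4 * aj) * B ρ₂ ^ 4 + ENNReal.ofReal (4 * aj) * B ρ₁ ^ 4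
          + H ρ₂ + H ρ₁))
        = ENNReal.ofReal (4 * aj) * B ρ₂ ^ 4 * volume (A ρ₂ ai)
          + ENNReal.ofReal (4 * aj) * (∫⁻ ρ₁ in A ρ₂ ai, B ρ₁ ^ 4)
          + H ρ₂ * volume (A ρ₂ ai)
          + ∫⁻ ρ₁ in A ρ₂ ai, H ρ₁ := by
      rw [lintegral_add_left ((measurable_const.fun_add (hB4.const_mul _)).fun_add measurable_const),
        lintegral_add_left (measurable_const.fun_add (hB4.const_mul _)),
        lintegral_add_left measurable_const, setLIntegral_const, setLIntegral_const,
        lintegral_const_mul' _ _ ENNReal.ofReal_ne_top]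
    rw [hsplit2]
    refine add_le_add (add_le_add (add_le_add ?_ (le_refl _)) ?_) (le_refl _)
    · calc ENNReal.ofReal (4 * aj) * B ρ₂ ^ 4 * volume (A ρ₂ ai)
          ≤ ENNReal.ofReal (4 * aj) * B ρ₂ ^ 4 * ENNReal.ofReal (4 * ai) :=
            mul_le_mul_right (volume_A_le _ _) _
        _ = ENNReal.ofReal (4 * ai) * ENNReal.ofReal (4 * aj) * B ρ₂ ^ 4 := by ring
    · calc H ρ₂ * volume (A ρ₂ ai) ≤ H ρ₂ * ENNReal.ofReal (4 * ai) :=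
          mul_le_mul_right (volume_A_le _ _) _
        _ = ENNReal.ofReal (4 * ai) * H ρ₂ := mul_comm _ _
  -- Step 3: integrate out ρ₂
  have step3 : (∫⁻ ρ₂, (ENNReal.ofReal (4 * ai) * ENNReal.ofReal (4 * aj) * B ρ₂ ^ 4
      + ENNReal.ofReal (4 * aj) * (∫⁻ ρ₁ in A ρ₂ ai, B ρ₁ ^ 4)
      + ENNReal.ofReal (4 * ai) * H ρ₂
      + (∫⁻ ρ₁ in A ρ₂ ai, H ρ₁)))
      ≤ 4 * (ENNReal.ofReal (4 * ai) * ENNReal.ofReal (4 * aj) * I) := by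
    have m1 : Measurable fun ρ₂ : ℝ =>
        ENNReal.ofReal (4 * ai) * ENNReal.ofReal (4 * aj) * B ρ₂ ^ 4 := hB4.const_mul _
    have mInner : Measurable fun ρ₂ : ℝ => ∫⁻ ρ₁ in A ρ₂ ai, B ρ₁ ^ 4 :=
      measurable_innerInt hB4 ai
    have m2 : Measurable fun ρ₂ : ℝ =>
        ENNReal.ofReal (4 * aj) * ∫⁻ ρ₁ in A ρ₂ ai, B ρ₁ ^ 4 := mInner.const_mul _
    have m3 : Measurable fun ρ₂ : ℝ => ENNReal.ofReal (4 * ai) * H ρ₂ := hH.const_mul _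
    rw [lintegral_add_left ((m1.fun_add m2).fun_add m3), lintegral_add_left (m1.fun_add m2),
      lintegral_add_left m1]
    have t1 : (∫⁻ ρ₂, ENNReal.ofReal (4 * ai) * ENNReal.ofReal (4 * aj) * B ρ₂ ^ 4)
        = ENNReal.ofReal (4 * ai) * ENNReal.ofReal (4 * aj) * I := by
      rw [lintegral_const_mul' _ _ (ENNReal.mul_ne_top ENNReal.ofReal_ne_top
        ENNReal.ofReal_ne_top)]
    have t2 : (∫⁻ ρ₂, ENNReal.ofReal (4 * aj) * ∫⁻ ρ₁ in A ρ₂ ai, B ρ₁ ^ 4)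
        ≤ ENNReal.ofReal (4 * ai) * ENNReal.ofReal (4 * aj) * I := by
      rw [lintegral_const_mul' _ _ ENNReal.ofReal_ne_top]
      calc ENNReal.ofReal (4 * aj) * ∫⁻ ρ₂, ∫⁻ ρ₁ in A ρ₂ ai, B ρ₁ ^ 4
          ≤ ENNReal.ofReal (4 * aj) * (ENNReal.ofReal (4 * ai) * I) :=
            mul_le_mul_right (swap_lemma hB4 ai) _
        _ = ENNReal.ofReal (4 * ai) * ENNReal.ofReal (4 * aj) * I := by ring
    have hHle : (∫⁻ ρ₂, H ρ₂) ≤ ENNReal.ofReal (4 * aj) * I := swap_lemma hB4 aj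
    have t3 : (∫⁻ ρ₂, ENNReal.ofReal (4 * ai) * H ρ₂)
        ≤ ENNReal.ofReal (4 * ai) * ENNReal.ofReal (4 * aj) * I := by
      rw [lintegral_const_mul' _ _ ENNReal.ofReal_ne_top]
      calc ENNReal.ofReal (4 * ai) * ∫⁻ ρ₂, H ρ₂
          ≤ ENNReal.ofReal (4 * ai) * (ENNReal.ofReal (4 * aj) * I) :=
            mul_le_mul_right hHle _
        _ = _ := by ring
    have t4 : (∫⁻ ρ₂, ∫⁻ ρ₁ in A ρ₂ ai, H ρ₁)
        ≤ ENNReal.ofReal (4 * ai) * ENNReal.ofReal (4 * aj) * I := by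
      calc (∫⁻ ρ₂, ∫⁻ ρ₁ in A ρ₂ ai, H ρ₁) ≤ ENNReal.ofReal (4 * ai) * ∫⁻ ρ₁, H ρ₁ :=
            swap_lemma hH ai
        _ ≤ ENNReal.ofReal (4 * ai) * (ENNReal.ofReal (4 * aj) * I) :=
            mul_le_mul_right hHle _
        _ = _ := by ring
    calc _ ≤ ENNReal.ofReal (4 * ai) * ENNReal.ofReal (4 * aj) * I
          + ENNReal.ofReal (4 * ai) * ENNReal.ofReal (4 * aj) * I
          + ENNReal.ofReal (4 * ai) * ENNReal.ofReal (4 * aj) * I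
          + ENNReal.ofReal (4 * ai) * ENNReal.ofReal (4 * aj) * I :=
        add_le_add (add_le_add (add_le_add (le_of_eq t1) t2) t3) t4
      _ = 4 * (ENNReal.ofReal (4 * ai) * ENNReal.ofReal (4 * aj) * I) := by ring
  -- finiteness and identification of I
  have hb4int : Integrable (fun x => b x ^ 4) volume := by
    have h := hb4.integrable_norm_rpow (by norm_num) (by norm_num)
    refine h.congr (Filter.Eventually.of_forall fun x => ?_)
    show ‖b x‖ ^ ((4:ℝ≥0∞)).toReal = b x ^ 4
    rw [Real.norm_of_nonneg (hbnn x)]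
    rw [show ((4 : ℝ≥0∞).toReal) = ((4 : ℕ) : ℝ) by norm_num, Real.rpow_natCast]
  have hI_eq : I = ∫⁻ x, ENNReal.ofReal (b x ^ 4) := by
    refine lintegral_congr fun x => ?_
    rw [← ENNReal.ofReal_pow (hbnn x)]
  have hI_fin : I ≠ ∞ := by
    rw [hI_eq]; exact hb4int.lintegral_lt_top.ne
  have hI_toReal : I.toReal = ∫ x, b x ^ 4 := by
    rw [hI_eq, integral_eq_lintegral_of_nonneg_ae
      (Filter.Eventually.of_forall fun x => pow_nonneg (hbnn x) 4)
      (hb.pow_const 4).aestronglyMeasurable]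
  -- combine the bound constant
  have hconst : (4 : ℝ≥0∞) * (ENNReal.ofReal (4 * ai) * ENNReal.ofReal (4 * aj))
      = ENNReal.ofReal (64 * (ai * aj)) := by
    rw [← ENNReal.ofReal_mul (by positivity), ← ENNReal.ofReal_ofNat 4,
      ← ENNReal.ofReal_mul (by norm_num)]
    ring_nf
  have hbound : L ≤ ENNReal.ofReal (64 * (ai * aj)) * I := by
    refine le_trans step2 (le_trans step3 (le_of_eq ?_))
    rw [← hconst]; ring
  -- conclude
  have hfin : ENNReal.ofReal (64 * (ai * aj)) * I ≠ ∞ :=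
    ENNReal.mul_ne_top ENNReal.ofReal_ne_top hI_fin
  have final := ENNReal.toReal_mono hfin (le_trans step1 hbound)
  rw [ENNReal.toReal_ofReal hLHS_nonneg] at final
  rw [ENNReal.toReal_mul, ENNReal.toReal_ofReal (by positivity), hI_toReal] at final
  refine le_trans final (le_of_eq ?_)
  have haiaj : ai * aj = (2 : ℝ) ^ (-((i : ℝ) + (j : ℝ))) := by
    rw [hai_def, haj_def, ← Real.rpow_add (by norm_num : (0:ℝ) < 2)]
    congr 1; ring
  rw [haiaj]
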